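/- Let p be a prime. There exists a ℤ_p-algebra isomorphism between ℤ_p[X]/(X^p − X) and the product ring ℤ_p^p of p copies of the p-adic integers (i.e. the ring of functions Fin p → ℤ_p). -/

import Mathlib

open Polynomial

private lemma toZMod_eq_zero_iff_dvd' {p : ℕ} [Fact p.Prime] (x : ℤ_[p]) :
    PadicInt.toZMod x = 0 ↔ (p : ℤ_[p]) ∣ x := by
  rw [← RingHom.mem_ker, PadicInt.ker_toZMod, PadicInt.maximalIdeal_eq_span_p,
    Ideal.mem_span_singleton]

private lemma teich_exists {p : ℕ} [Fact p.Prime] (j : Fin p) :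
    ∃ z : ℤ_[p], z ^ p - z = 0 ∧ PadicInt.toZMod z = ((j : ℕ) : ZMod p) := by
  have hp : p.Prime := Fact.out
  set F : Polynomial ℤ_[p] := X ^ p - X with hF
  set a : ℤ_[p] := ((j : ℕ) : ℤ_[p]) with ha
  have heval : ∀ x : ℤ_[p], F.eval x = x ^ p - x := by intro x; simp [hF]
  have hderiv : ∀ x : ℤ_[p], F.derivative.eval x = p * x ^ (p - 1) - 1 := by
    intro x
    simp [hF, derivative_X_pow]
  have hdvd_eval : (p : ℤ_[p]) ∣ F.eval a := by
    rw [← toZMod_eq_zero_iff_dvd']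
    rw [heval]
    have : PadicInt.toZMod a = ((j : ℕ) : ZMod p) := by simp [ha]
    rw [map_sub, map_pow, this, ZMod.pow_card, sub_self]
  have hderiv_norm : ‖F.derivative.eval a‖ = 1 := by
    rw [hderiv]
    refine le_antisymm (PadicInt.norm_le_one _) (not_lt.mp ?_)
    intro hlt
    rw [PadicInt.norm_lt_one_iff_dvd] at hlt
    have h2 : (p : ℤ_[p]) ∣ (p : ℤ_[p]) * a ^ (p - 1) := Dvd.intro _ rfl
    have h1 : (p : ℤ_[p]) ∣ 1 := by
      have := dvd_sub h2 hlt
      simpa using this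
    have := (PadicInt.norm_lt_one_iff_dvd (1 : ℤ_[p])).mpr h1
    simp at this
  have hnorm : ‖F.eval a‖ < ‖F.derivative.eval a‖ ^ 2 := by
    rw [hderiv_norm, one_pow, ← PadicInt.norm_lt_one_iff_dvd] at *
    exact hdvd_eval
  obtain ⟨z, hz, hza, -⟩ := hensels_lemma hnorm
  refine ⟨z, by rw [← heval, ← Polynomial.coe_aeval_eq_eval]; exact hz, ?_⟩
  rw [Polynomial.coe_aeval_eq_eval, hderiv_norm, PadicInt.norm_lt_one_iff_dvd, ← toZMod_eq_zero_iff_dvd'] at hza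
  have : PadicInt.toZMod z = PadicInt.toZMod a := by
    rw [map_sub, sub_eq_zero] at hza; exact hza
  rw [this]; simp [ha]

/-- For a prime `p` there is a `ℤ_p`-algebra isomorphism
`ℤ_p[X]/(X^p - X) ≅ ℤ_p^p`. -/
theorem stmt14 (p : ℕ) [Fact p.Prime] :
    Nonempty ((Polynomial ℤ_[p] ⧸
        Ideal.span {(Polynomial.X : Polynomial ℤ_[p]) ^ p - Polynomial.X})
      ≃ₐ[ℤ_[p]] (Fin p → ℤ_[p])) := by
  have hp : p.Prime := Fact.out
  choose z hz hzmod using fun j : Fin p => teich_exists j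
  -- units of differences
  have hunit : ∀ i j : Fin p, i ≠ j → IsUnit (z i - z j) := by
    intro i j hij
    rw [PadicInt.isUnit_iff]
    refine le_antisymm (PadicInt.norm_le_one _) (not_lt.mp ?_)
    intro hlt
    rw [PadicInt.norm_lt_one_iff_dvd, ← toZMod_eq_zero_iff_dvd', map_sub, hzmod, hzmod,
      sub_eq_zero] at hlt
    have : (i : ℕ) = (j : ℕ) := by
      have hi := ZMod.val_cast_of_lt i.isLt
      have hj := ZMod.val_cast_of_lt j.isLt
      rw [← hi, ← hj, hlt]
    exact hij (Fin.ext this)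
  have hcop : ∀ i j : Fin p, i ≠ j →
      IsCoprime (X - C (z i)) (X - C (z j)) := fun i j hij =>
    Polynomial.isCoprime_X_sub_C_of_isUnit_sub (hunit i j hij)
  -- product equals X^p - X
  set f : Polynomial ℤ_[p] := X ^ p - X with hf
  have hfmonic : f.Monic := by
    apply Polynomial.monic_X_pow_sub
    rw [degree_X]
    exact_mod_cast hp.one_lt
  have hfdeg : f.natDegree = p := by
    rw [hf, Polynomial.natDegree_sub_eq_left_of_natDegree_lt, natDegree_X_pow]
    rw [natDegree_X_pow, natDegree_X]
    exact hp.one_lt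
  set g : Polynomial ℤ_[p] := ∏ j : Fin p, (X - C (z j)) with hg
  have hgmonic : g.Monic := monic_prod_of_monic _ _ fun j _ => monic_X_sub_C _
  have hgdvd : g ∣ f := by
    apply Finset.prod_dvd_of_coprime
    · intro i _ j _ hij
      exact hcop i j hij
    · intro j _
      rw [Polynomial.dvd_iff_isRoot]
      simp [hf, IsRoot, hz j]
  have hgdeg : g.natDegree = p := by
    rw [hg, Polynomial.natDegree_prod _ _ fun j _ => X_sub_C_ne_zero (z j)]
    simp
  have hfg : f = g :=
    Polynomial.eq_of_monic_of_dvd_of_natDegree_le hgmonic hfmonic hgdvd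
      (by rw [hfdeg, hgdeg])
  -- ideal equality
  have hideal : Ideal.span {f} = ⨅ j : Fin p, Ideal.span {X - C (z j)} := by
    rw [Ideal.iInf_span_singleton hcop, ← hg, hfg]
  -- CRT as algebra equiv
  have hcopI : Pairwise (Function.onFun IsCoprime fun j : Fin p => Ideal.span {X - C (z j)}) := by
    intro i j hij
    rw [Function.onFun, Ideal.isCoprime_span_singleton_iff]
    exact hcop i j hij
  let e := Ideal.quotientInfRingEquivPiQuotient
    (fun j : Fin p => Ideal.span {X - C (z j)}) hcopI
  let eAlg : (Polynomial ℤ_[p] ⧸ ⨅ j : Fin p, Ideal.span {X - C (z j)}) ≃ₐ[ℤ_[p]]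
      (∀ j : Fin p, Polynomial ℤ_[p] ⧸ Ideal.span {X - C (z j)}) :=
    AlgEquiv.ofRingEquiv (f := e) (by
      intro r
      show e (Ideal.Quotient.mk _ (C r)) = _
      ext i
      rfl)
  exact ⟨((Ideal.quotientEquivAlgOfEq ℤ_[p] hideal).trans eAlg).trans
    (AlgEquiv.piCongrRight fun j => Polynomial.quotientSpanXSubCAlgEquiv (z j))⟩
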